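/- For every n ≥ 1, every 0 < α ≤ 1 ≤ β ≤ λ and every M ∈ ℕ there exists a natural number N = N(n, α, β, λ, M) with the following property: for every t > 0, every family π of cubes in ℝⁿ with covering multiplicity at most M such that αt ≤ diam Q ≤ βt for all Q ∈ π, and every assignment to each Q ∈ π of a cube K_Q with Q ⊆ K_Q and diam K_Q ≤ λt, the family {K_Q : Q ∈ π} can be partitioned into at most N subfamilies, each consisting of pairwise disjoint cubes. -/

import Mathlib

open MeasureTheory Metric Set
open scoped ENNReal

/-- A closed cube `Q(c, r)` in `ℝⁿ` (with the uniform norm): center `c`, radius `r`. -/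
structure PCube (n : ℕ) where
  c : Fin n → ℝ
  r : ℝ

namespace PCube

variable {n : ℕ}

/-- The underlying set of the cube. -/
def toSet (Q : PCube n) : Set (Fin n → ℝ) := Metric.closedBall Q.c Q.r

/-- The diameter `2r` of the cube (uniform norm). -/
def diam (Q : PCube n) : ℝ := 2 * Q.r

/-- Dilation `λQ` of the cube about its center. -/
def scale (Q : PCube n) (l : ℝ) : PCube n := ⟨Q.c, l * Q.r⟩

/-- The volume `|Q| = (2r)ⁿ` of the cube. -/
def vol (Q : PCube n) : ℝ := (2 * Q.r) ^ n

end PCube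

/-- Distance between two subsets of `ℝⁿ`. -/
noncomputable def setDist {n : ℕ} (A B : Set (Fin n → ℝ)) : ℝ :=
  sInf (Set.image2 dist A B)

/-- Oscillation `E(f; U)` of `f` on `U`. -/
noncomputable def osc {n : ℕ} (f : (Fin n → ℝ) → ℝ) (U : Set (Fin n → ℝ)) : ℝ :=
  sSup ((fun q : (Fin n → ℝ) × (Fin n → ℝ) => |f q.1 - f q.2|) '' (U ×ˢ U))

/-- `Q` is `α`-porous with respect to `S`. -/
def Porous {n : ℕ} (α : ℝ) (S : Set (Fin n → ℝ)) (Q : PCube n) : Prop :=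
  ∃ Q' : PCube n, 0 < Q'.r ∧ Q'.toSet ⊆ Q.toSet \ S ∧ α * Q.diam ≤ Q'.diam

/-- `‖∇F(x)‖ = max_i |∂F/∂x_i(x)|`. -/
noncomputable def gradNorm {n : ℕ} (F : (Fin n → ℝ) → ℝ) (x : Fin n → ℝ) : ℝ :=
  ‖fun i : Fin n => fderiv ℝ F x (Pi.single i 1)‖

/-- A packing: a finite family of nondegenerate, pairwise disjoint cubes. -/
def IsPacking {n : ℕ} (π : Finset (PCube n)) : Prop :=
  (∀ Q ∈ π, 0 < Q.r) ∧ ∀ Q ∈ π, ∀ Q' ∈ π, Q ≠ Q' → Disjoint Q.toSet Q'.toSet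

/-- All cubes in the family have equal diameter. -/
def EqualDiam {n : ℕ} (π : Finset (PCube n)) : Prop :=
  ∀ Q ∈ π, ∀ Q' ∈ π, Q.r = Q'.r

/-- The functional `A_p(f; t : S)` (via local oscillations). -/
noncomputable def Ap {n : ℕ} (p : ℝ) (f : (Fin n → ℝ) → ℝ) (t : ℝ)
    (S : Set (Fin n → ℝ)) : ℝ≥0∞ :=
  ⨆ π ∈ {π : Finset (PCube n) | IsPacking π ∧ EqualDiam π ∧ (∀ Q ∈ π, Q.c ∈ S) ∧
      ∀ Q ∈ π, Q.diam ≤ t},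
    ENNReal.ofReal ((∑ Q ∈ π, Q.vol * osc f (Q.toSet ∩ S) ^ p) ^ (1 / p))

/-- `𝔸_{p,α}(f; t : S)`: as `A_p` but over `α`-porous packings. -/
noncomputable def ApPorous {n : ℕ} (p α : ℝ) (f : (Fin n → ℝ) → ℝ) (t : ℝ)
    (S : Set (Fin n → ℝ)) : ℝ≥0∞ :=
  ⨆ π ∈ {π : Finset (PCube n) | IsPacking π ∧ EqualDiam π ∧ (∀ Q ∈ π, Q.c ∈ S) ∧
      (∀ Q ∈ π, Q.diam ≤ t) ∧ ∀ Q ∈ π, Porous α S Q},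
    ENNReal.ofReal ((∑ Q ∈ π, Q.vol * osc f (Q.toSet ∩ S) ^ p) ^ (1 / p))

/-- `E(f; Q)_{L_p(μ)}`. -/
noncomputable def oscLp {n : ℕ} (μ : Measure (Fin n → ℝ)) (p : ℝ) (f : (Fin n → ℝ) → ℝ)
    (Q : PCube n) : ℝ≥0∞ :=
  ((μ Q.toSet)⁻¹ ^ 2 *
    ∫⁻ x in Q.toSet, ∫⁻ y in Q.toSet, ENNReal.ofReal (|f x - f y| ^ p) ∂μ ∂μ) ^ (1 / p)

/-- `A_p(f; t : S)_{L_p(μ)}`. -/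
noncomputable def ApLp {n : ℕ} (μ : Measure (Fin n → ℝ)) (p : ℝ) (f : (Fin n → ℝ) → ℝ)
    (t : ℝ) (S : Set (Fin n → ℝ)) : ℝ≥0∞ :=
  ⨆ π ∈ {π : Finset (PCube n) | IsPacking π ∧ EqualDiam π ∧ (∀ Q ∈ π, Q.c ∈ S) ∧
      ∀ Q ∈ π, Q.diam ≤ t},
    (∑ Q ∈ π, ENNReal.ofReal Q.vol * oscLp μ p f Q ^ p) ^ (1 / p)

/-- `𝒜_{p,α}(f; t : S)_{L_p(μ)}`: over `α`-porous packings centered at the boundary of `S`. -/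
noncomputable def AcalLp {n : ℕ} (μ : Measure (Fin n → ℝ)) (p α : ℝ) (f : (Fin n → ℝ) → ℝ)
    (t : ℝ) (S : Set (Fin n → ℝ)) : ℝ≥0∞ :=
  ⨆ π ∈ {π : Finset (PCube n) | IsPacking π ∧ EqualDiam π ∧ (∀ Q ∈ π, Q.c ∈ frontier S) ∧
      (∀ Q ∈ π, Q.diam ≤ t) ∧ ∀ Q ∈ π, Porous α S Q},
    (∑ Q ∈ π, ENNReal.ofReal Q.vol * oscLp μ p f Q ^ p) ^ (1 / p)

/-- `ρ_{α,S}(x,y) ∈ [0,∞]`. -/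
noncomputable def rho {n : ℕ} (α : ℝ) (S : Set (Fin n → ℝ)) (x y : Fin n → ℝ) : ℝ≥0∞ :=
  sInf {d : ℝ≥0∞ | ∃ Q : PCube n, 0 < Q.r ∧ x ∈ Q.toSet ∧ y ∈ Q.toSet ∧
    (Q.scale α).toSet ⊆ Sᶜ ∧ d = ENNReal.ofReal Q.diam}

/-- The sharp maximal function `f^♯_{∞,S}`. -/
noncomputable def sharpMax {n : ℕ} (S : Set (Fin n → ℝ)) (f : (Fin n → ℝ) → ℝ)
    (x : Fin n → ℝ) : ℝ :=
  sSup {v : ℝ | ∃ r : ℝ, 0 < r ∧ ∃ y ∈ Metric.closedBall x r ∩ S,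
    ∃ z ∈ Metric.closedBall x r ∩ S, v = |f y - f z| / r}

/-- `supp μ = S`. -/
def IsSuppOn {n : ℕ} (μ : Measure (Fin n → ℝ)) (S : Set (Fin n → ℝ)) : Prop :=
  μ Sᶜ = 0 ∧ ∀ x ∈ S, ∀ r : ℝ, 0 < r → 0 < μ (Metric.closedBall x r)

/-- The doubling condition (1.12). -/
def Doubling {n : ℕ} (μ : Measure (Fin n → ℝ)) (S : Set (Fin n → ℝ)) (cμ : ℝ) : Prop :=
  ∀ x ∈ S, ∀ r : ℝ, 0 < r → r ≤ 1 / 2 →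
    μ (Metric.closedBall x (2 * r)) ≤ ENNReal.ofReal cμ * μ (Metric.closedBall x r)

/-- Condition `(D_n)` (1.11). -/
def CondDn {n : ℕ} (μ : Measure (Fin n → ℝ)) (S : Set (Fin n → ℝ)) (Cμ : ℝ) : Prop :=
  ∀ x ∈ S, ∀ r : ℝ, 0 < r → r ≤ 1 → ∀ k : ℝ, 1 ≤ k → k ≤ 1 / r →
    μ (Metric.closedBall x (k * r)) ≤ ENNReal.ofReal (Cμ * k ^ n) * μ (Metric.closedBall x r)

/-- The normalization condition (1.13). -/
def Normalized {n : ℕ} (μ : Measure (Fin n → ℝ)) (S : Set (Fin n → ℝ)) (C' C'' : ℝ) : Prop :=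
  ∀ x ∈ S, ENNReal.ofReal C' ≤ μ (Metric.closedBall x 1) ∧
    μ (Metric.closedBall x 1) ≤ ENNReal.ofReal C''

/-- The double integral over `{‖x−y‖ < t}` (before taking the `1/p` power). -/
noncomputable def I1 {n : ℕ} (μ : Measure (Fin n → ℝ)) (p : ℝ) (S : Set (Fin n → ℝ))
    (f : (Fin n → ℝ) → ℝ) (t : ℝ) : ℝ≥0∞ :=
  ∫⁻ x in S, ∫⁻ y in S,
    ({y : Fin n → ℝ | dist x y < t}.indicator
      (fun y => ENNReal.ofReal (|f x - f y| ^ p) * ENNReal.ofReal (t ^ ((n : ℝ) - p)) *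
        ((μ (Metric.closedBall x t))⁻¹) ^ 2)) y ∂μ ∂μ

/-- The double integral over `{ρ_{α,S}(x,y) < δ}` (before taking the `1/p` power). -/
noncomputable def I2 {n : ℕ} (μ : Measure (Fin n → ℝ)) (p α : ℝ) (S : Set (Fin n → ℝ))
    (f : (Fin n → ℝ) → ℝ) (δ : ℝ) : ℝ≥0∞ :=
  ∫⁻ x in S, ∫⁻ y in S,
    ({y : Fin n → ℝ | rho α S x y < ENNReal.ofReal δ}.indicator
      (fun y => ENNReal.ofReal (|f x - f y| ^ p) * rho α S x y ^ ((n : ℝ) - p) *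
        ((μ (Metric.closedBall x (rho α S x y).toReal))⁻¹) ^ 2)) y ∂μ ∂μ

theorem statement1 (n : ℕ) (hn : 1 ≤ n) (α β lam : ℝ) (M : ℕ)
    (hα0 : 0 < α) (hα1 : α ≤ 1) (hβ : 1 ≤ β) (hlam : β ≤ lam) :
    ∃ N : ℕ, 0 < N ∧
      ∀ t : ℝ, 0 < t → ∀ (π : Set (PCube n)) (K : PCube n → PCube n),
        (∀ Q ∈ π, 0 < Q.r) →
        (∀ x : Fin n → ℝ,
          {Q ∈ π | x ∈ Q.toSet}.Finite ∧ {Q ∈ π | x ∈ Q.toSet}.ncard ≤ M) →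
        (∀ Q ∈ π, α * t ≤ Q.diam ∧ Q.diam ≤ β * t) →
        (∀ Q ∈ π, 0 < (K Q).r ∧ Q.toSet ⊆ (K Q).toSet ∧ (K Q).diam ≤ lam * t) →
        ∃ φ : PCube n → Fin N,
          ∀ Q ∈ π, ∀ Q' ∈ π, φ (K Q) = φ (K Q') → K Q ≠ K Q' →
            Disjoint (K Q).toSet (K Q').toSet := by
  classical
  set m : ℕ := ⌈6 * lam / α⌉₊ + 1 with hm
  set c : ℕ := M * m ^ n + 1 with hc
  refine ⟨Fintype.card ((Fin n → ZMod 3) × Fin c), Fintype.card_pos, ?_⟩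
  intro t ht π K hr hmul hdiam hK
  have hlam1 : (1:ℝ) ≤ lam := le_trans hβ hlam
  set L : ℝ := lam * t with hLdef
  have hL0 : 0 < L := mul_pos (lt_of_lt_of_le one_pos hlam1) ht
  set s : ℝ := α * t / 2 with hsdef
  have hs0 : 0 < s := by positivity
  set cell : PCube n → (Fin n → ℤ) := fun C i => ⌊C.c i / L⌋ with hcelldef
  have cell_lb : ∀ (C : PCube n) (i : Fin n), ((cell C i : ℤ) : ℝ) * L ≤ C.c i := by
    intro C i
    have h : ((cell C i : ℤ) : ℝ) ≤ C.c i / L := by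
      simpa [hcelldef] using Int.floor_le (C.c i / L)
    calc ((cell C i : ℤ) : ℝ) * L ≤ (C.c i / L) * L :=
          mul_le_mul_of_nonneg_right h hL0.le
      _ = C.c i := div_mul_cancel₀ _ (ne_of_gt hL0)
  have cell_ub : ∀ (C : PCube n) (i : Fin n), C.c i < (((cell C i : ℤ) : ℝ) + 1) * L := by
    intro C i
    have h2 : C.c i / L < ((cell C i : ℤ) : ℝ) + 1 := by
      simpa [hcelldef] using Int.lt_floor_add_one (C.c i / L)
    calc C.c i = (C.c i / L) * L := (div_mul_cancel₀ _ (ne_of_gt hL0)).symm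
      _ < (((cell C i : ℤ) : ℝ) + 1) * L := mul_lt_mul_of_pos_right h2 hL0
  have hKr : ∀ Q ∈ π, (K Q).r ≤ L / 2 := by
    intro Q hQ
    have := (hK Q hQ).2.2
    simp only [PCube.diam] at this
    linarith
  have hQr : ∀ Q ∈ π, s ≤ Q.r := by
    intro Q hQ
    have := (hdiam Q hQ).1
    simp only [PCube.diam] at this
    rw [hsdef]; linarith
  set F : (Fin n → ℤ) → Set (PCube n) :=
    fun j => {C | (∃ Q ∈ π, K Q = C) ∧ cell C = j} with hFdef
  set g : (Fin n → ℤ) → (Fin n → Fin m) → (Fin n → ℝ) :=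
    fun j v i => (j i : ℝ) * L - L/2 + s * ((v i : ℕ) : ℝ) with hgdef
  have key : ∀ j, (F j).Finite ∧ (F j).ncard ≤ M * m ^ n := by
    intro j
    have hsub : F j ⊆ K '' {Q | Q ∈ π ∧ cell (K Q) = j} := by
      rintro C ⟨⟨Q, hQ, rfl⟩, hcellC⟩
      exact ⟨Q, ⟨hQ, hcellC⟩, rfl⟩
    have hSsub : {Q | Q ∈ π ∧ cell (K Q) = j} ⊆
        ⋃ v : Fin n → Fin m, {Q | Q ∈ π ∧ g j v ∈ Q.toSet} := by
      rintro Q ⟨hQ, hcellQ⟩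
      have hc_mem : Q.c ∈ (K Q).toSet :=
        (hK Q hQ).2.1 (Metric.mem_closedBall_self (hr Q hQ).le)
      have hcdist : dist Q.c (K Q).c ≤ L / 2 :=
        le_trans (Metric.mem_closedBall.mp hc_mem) (hKr Q hQ)
      have hv : ∀ i : Fin n, ∃ k : Fin m,
          |((j i : ℝ) * L - L/2 + s * ((k : ℕ) : ℝ)) - Q.c i| ≤ s := by
        intro i
        have hxi : |Q.c i - (K Q).c i| ≤ L / 2 := by
          have h1 := dist_le_pi_dist Q.c (K Q).c i
          rw [Real.dist_eq] at h1
          linarith [le_trans h1 hcdist]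
        have hKlb : ((j i : ℤ) : ℝ) * L ≤ (K Q).c i := by
          have h := cell_lb (K Q) i
          rw [hcellQ] at h; exact h
        have hKub : (K Q).c i < (((j i : ℤ) : ℝ) + 1) * L := by
          have h := cell_ub (K Q) i
          rw [hcellQ] at h; exact h
        set a : ℝ := (j i : ℝ) * L - L/2 with hadef
        have hal : a ≤ Q.c i := by
          have h := abs_le.mp hxi
          rw [hadef]; linarith [h.2]
        have hau : Q.c i < a + 2 * L := by
          have h := abs_le.mp hxi
          rw [hadef]; linarith [h.1]
        set w : ℤ := ⌊(Q.c i - a) / s⌋ with hwdef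
        have hw0 : 0 ≤ w := Int.floor_nonneg.mpr (div_nonneg (by linarith) hs0.le)
        have hwub : (w : ℝ) < 2 * L / s := by
          calc (w : ℝ) ≤ (Q.c i - a) / s := Int.floor_le _
            _ < 2 * L / s := by gcongr; linarith
        have hwm : w.toNat < m := by
          rw [Int.toNat_lt' (by omega : 0 < m)]
          have h1 : 2 * L / s ≤ (⌈6 * lam / α⌉₊ : ℝ) := by
            have h2 : 2 * L / s = 4 * lam / α := by
              rw [hLdef, hsdef]; field_simp; ring
            rw [h2]
            calc 4 * lam / α ≤ 6 * lam / α := by gcongr; linarith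
              _ ≤ _ := Nat.le_ceil _
          have h3 : (w : ℝ) < (m : ℝ) := by
            rw [hm]; push_cast
            linarith
          exact_mod_cast h3
        refine ⟨⟨w.toNat, hwm⟩, ?_⟩
        have hwcast : ((w.toNat : ℕ) : ℝ) = (w : ℝ) := by
          exact_mod_cast Int.toNat_of_nonneg hw0
        have hfl : a + s * w ≤ Q.c i := by
          have h := Int.floor_le ((Q.c i - a) / s)
          rw [← hwdef] at h
          have h2 := (le_div_iff₀ hs0).mp h
          linarith
        have hfu : Q.c i < a + s * w + s := by
          have h := Int.lt_floor_add_one ((Q.c i - a) / s)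
          rw [← hwdef] at h
          have h2 := (div_lt_iff₀ hs0).mp h
          linarith
        rw [abs_le]
        constructor
        · simp only [hwcast]; linarith
        · simp only [hwcast]; linarith
      choose v hvv using hv
      refine Set.mem_iUnion.mpr ⟨v, hQ, ?_⟩
      show g j v ∈ Metric.closedBall Q.c Q.r
      rw [Metric.mem_closedBall]
      refine dist_pi_le_iff (le_trans hs0.le (hQr Q hQ)) |>.mpr ?_
      intro i
      rw [Real.dist_eq]
      refine le_trans ?_ (hQr Q hQ)
      simpa [hgdef] using hvv i
    set T : (Fin n → Fin m) → Finset (PCube n) :=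
      fun v => ((hmul (g j v)).1).toFinset with hTdef
    have hSsub' : {Q | Q ∈ π ∧ cell (K Q) = j} ⊆ ↑(Finset.univ.biUnion T) := by
      intro Q hQ
      obtain ⟨v, hv⟩ := Set.mem_iUnion.mp (hSsub hQ)
      simp only [Finset.coe_biUnion, Finset.mem_coe, Finset.mem_univ, Set.mem_iUnion,
        Set.iUnion_true]
      exact ⟨v, by simpa [hTdef] using hv⟩
    have hSfin : {Q | Q ∈ π ∧ cell (K Q) = j}.Finite :=
      Set.Finite.subset (Finset.univ.biUnion T).finite_toSet hSsub'
    have hScard : {Q | Q ∈ π ∧ cell (K Q) = j}.ncard ≤ M * m ^ n := by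
      calc {Q | Q ∈ π ∧ cell (K Q) = j}.ncard
          ≤ (↑(Finset.univ.biUnion T) : Set (PCube n)).ncard :=
            Set.ncard_le_ncard hSsub' (Finset.univ.biUnion T).finite_toSet
        _ = (Finset.univ.biUnion T).card := Set.ncard_coe_finset _
        _ ≤ ∑ v : Fin n → Fin m, (T v).card := Finset.card_biUnion_le
        _ ≤ ∑ _v : Fin n → Fin m, M := by
            apply Finset.sum_le_sum
            intro v _
            have h1 := (hmul (g j v)).2
            have h2 : (T v).card = {Q | Q ∈ π ∧ g j v ∈ Q.toSet}.ncard := by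
              rw [hTdef, Set.ncard_eq_toFinset_card _ (hmul (g j v)).1]
            rw [h2]; exact h1
        _ = (m ^ n) * M := by
            rw [Finset.sum_const, Finset.card_univ]
            simp [Fintype.card_fun]
        _ = M * m ^ n := Nat.mul_comm _ _
    constructor
    · exact Set.Finite.subset (hSfin.image K) hsub
    · calc (F j).ncard ≤ (K '' {Q | Q ∈ π ∧ cell (K Q) = j}).ncard :=
            Set.ncard_le_ncard hsub (hSfin.image K)
        _ ≤ {Q | Q ∈ π ∧ cell (K Q) = j}.ncard := Set.ncard_image_le hSfin
        _ ≤ M * m ^ n := hScard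
  -- injections of each F j into Fin c
  have hemb : ∀ j, ∃ f : (F j) → Fin c, Function.Injective f := by
    intro j
    obtain ⟨hfin, hcard⟩ := key j
    haveI := hfin.fintype
    have hcard' : Fintype.card (F j) ≤ Fintype.card (Fin c) := by
      rw [Fintype.card_fin, hc]
      have : Fintype.card (F j) = (F j).ncard := by
        rw [Set.ncard_eq_toFinset_card' (F j)]
        exact (Set.toFinset_card (F j)).symm
      omega
    obtain ⟨f⟩ := Function.Embedding.nonempty_of_card_le hcard'
    exact ⟨f, f.injective⟩
  choose e he using hemb
  set φ₀ : PCube n → (Fin n → ZMod 3) × Fin c :=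
    fun C => (fun i => ((cell C i : ℤ) : ZMod 3),
      if h : C ∈ F (cell C) then e (cell C) ⟨C, h⟩ else 0) with hφ₀def
  refine ⟨(Fintype.equivFin _) ∘ φ₀, ?_⟩
  intro Q hQ Q' hQ' hphi hne
  have hφ0 : φ₀ (K Q) = φ₀ (K Q') := (Fintype.equivFin _).injective hphi
  have hmemF : K Q ∈ F (cell (K Q)) := ⟨⟨Q, hQ, rfl⟩, rfl⟩
  have hmemF' : K Q' ∈ F (cell (K Q')) := ⟨⟨Q', hQ', rfl⟩, rfl⟩
  have h1 : (fun i => ((cell (K Q) i : ℤ) : ZMod 3)) =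
      (fun i => ((cell (K Q') i : ℤ) : ZMod 3)) := congrArg Prod.fst hφ0
  have h2 : (if h : K Q ∈ F (cell (K Q)) then e (cell (K Q)) ⟨K Q, h⟩ else 0) =
      (if h : K Q' ∈ F (cell (K Q')) then e (cell (K Q')) ⟨K Q', h⟩ else 0) :=
    congrArg Prod.snd hφ0
  rw [dif_pos hmemF, dif_pos hmemF'] at h2
  have inj2 : ∀ (j j' : Fin n → ℤ), j = j' → ∀ (C C' : PCube n) (h : C ∈ F j) (h' : C' ∈ F j'),
      e j ⟨C, h⟩ = e j' ⟨C', h'⟩ → C = C' := by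
    rintro j _ rfl C C' h h' heq
    exact congrArg Subtype.val (he j heq)
  by_cases jeq : cell (K Q) = cell (K Q')
  · exact absurd (inj2 _ _ jeq _ _ hmemF hmemF' h2) hne
  · obtain ⟨i, hi⟩ := Function.ne_iff.mp jeq
    have hmod : ((cell (K Q) i : ℤ) : ZMod 3) = ((cell (K Q') i : ℤ) : ZMod 3) :=
      congrFun h1 i
    have hdvd : (3 : ℤ) ∣ cell (K Q') i - cell (K Q) i :=
      ((ZMod.intCast_eq_intCast_iff _ _ _).mp hmod).dvd
    have hd0 : cell (K Q') i - cell (K Q) i ≠ 0 := sub_ne_zero.mpr (Ne.symm hi)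
    have habs : (3 : ℤ) ≤ |cell (K Q') i - cell (K Q) i| :=
      Int.le_of_dvd (abs_pos.mpr hd0) ((dvd_abs _ _).mpr hdvd)
    have hx1 := cell_lb (K Q) i
    have hx2 := cell_ub (K Q) i
    have hy1 := cell_lb (K Q') i
    have hy2 := cell_ub (K Q') i
    have hsep : 2 * L < |(K Q).c i - (K Q').c i| := by
      rcases le_abs.mp habs with h | h
      · -- 3 ≤ cell' - cell
        have hcast : ((cell (K Q) i : ℤ) : ℝ) + 3 ≤ ((cell (K Q') i : ℤ) : ℝ) := by
          have : (cell (K Q) i) + 3 ≤ cell (K Q') i := by omega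
          exact_mod_cast this
        have : 2 * L < (K Q').c i - (K Q).c i := by nlinarith
        calc 2 * L < (K Q').c i - (K Q).c i := this
          _ ≤ |(K Q).c i - (K Q').c i| := by rw [abs_sub_comm]; exact le_abs_self _
      · -- 3 ≤ -(cell' - cell)
        have hcast : ((cell (K Q') i : ℤ) : ℝ) + 3 ≤ ((cell (K Q) i : ℤ) : ℝ) := by
          have : (cell (K Q') i) + 3 ≤ cell (K Q) i := by omega
          exact_mod_cast this
        have : 2 * L < (K Q).c i - (K Q').c i := by nlinarith
        calc 2 * L < (K Q).c i - (K Q').c i := this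
          _ ≤ |(K Q).c i - (K Q').c i| := le_abs_self _
    have hdist : (K Q).r + (K Q').r < dist (K Q).c (K Q').c := by
      have h4 := dist_le_pi_dist (K Q).c (K Q').c i
      rw [Real.dist_eq] at h4
      have hr1 := hKr Q hQ
      have hr2 := hKr Q' hQ'
      linarith
    exact Metric.closedBall_disjoint_closedBall hdist
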